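/- Let H be a graph and let F be the disjoint union of graphs F_1,…,F_r. Let I be the set of orders of the components, n(F) the maximum order, and k_i(F) the number of components of order i. Then R(F,H) ≤ max over j ∈ I of ( max over components F_p with v(F_p)=j of R(F_p,H) ) + Σ_{i=j}^{n(F)} i·k_i(F) − j. -/

import Mathlib

open SimpleGraph Finset

/-- `G` embeds into `H` (a copy of `G` appears in `H`). -/
def graphEmbeds {V W : Type*} (G : SimpleGraph V) (H : SimpleGraph W) : Prop :=
  ∃ f : V → W, Function.Injective f ∧ ∀ u v, G.Adj u v → H.Adj (f u) (f v)

/-- `N` is large enough for the Ramsey property: every red/blue coloring of `K_N`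
(the red graph `R`, blue graph `Rᶜ`) contains a red `G` or a blue `H`. -/
def isRamsey {V W : Type*} (G : SimpleGraph V) (H : SimpleGraph W) (N : ℕ) : Prop :=
  ∀ R : SimpleGraph (Fin N), graphEmbeds G R ∨ graphEmbeds H Rᶜ

/-- The Ramsey number `R(G,H)`. -/
noncomputable def ramsey {V W : Type*} (G : SimpleGraph V) (H : SimpleGraph W) : ℕ :=
  sInf {N | isRamsey G H N}

/-- `t` disjoint copies of the complete graph `K_m`. -/
def kCliques (t m : ℕ) : SimpleGraph (Fin t × Fin m) where
  Adj x y := x.1 = y.1 ∧ x.2 ≠ y.2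
  symm := ⟨fun x y h => ⟨h.1.symm, h.2.symm⟩⟩
  loopless := ⟨fun x h => h.2 rfl⟩

/-- The chromatic number as a natural number. -/
noncomputable def chromNum {V : Type*} (G : SimpleGraph V) : ℕ := sInf {n | G.Colorable n}

/-- The chromatic surplus: the minimum size of a color class over all proper
colorings with `chromNum G` colors. -/
noncomputable def surplus {V : Type*} [Fintype V] (G : SimpleGraph V) : ℕ :=
  sInf {k | ∃ C : G.Coloring (Fin (chromNum G)), ∃ i : Fin (chromNum G),
    (Finset.univ.filter (fun v => C v = i)).card = k}

/-- `a` is a leaf of `G`: it has a unique neighbor. -/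
def IsLeaf {V : Type*} (G : SimpleGraph V) (a : V) : Prop := ∃! w, G.Adj a w

/-- Stretching: delete a leaf `b` and attach a new vertex (reusing the label `b`)
to the leaf `a`. -/
def isStretch {V : Type*} (T T' : SimpleGraph V) : Prop :=
  ∃ a b : V, a ≠ b ∧ IsLeaf T a ∧ IsLeaf T b ∧
    ∀ x y, T'.Adj x y ↔
      ((T.Adj x y ∧ x ≠ b ∧ y ≠ b) ∨ (x = b ∧ y = a) ∨ (x = a ∧ y = b))

/-- Expanding at a vertex `u` of degree `d` (`2 ≤ d ≤ n-2`) all of whose neighbors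
are leaves except `z0`: delete a leaf `b` outside `N[u]` and attach a new vertex
(reusing the label `b`) to `u`. -/
def isExpand {V : Type*} [Fintype V] (T T' : SimpleGraph V) : Prop :=
  ∃ u b z0 : V, T.Adj u z0 ∧ ¬ IsLeaf T z0 ∧
    (∀ z, T.Adj u z → z ≠ z0 → IsLeaf T z) ∧
    2 ≤ (T.neighborSet u).ncard ∧ (T.neighborSet u).ncard ≤ Fintype.card V - 2 ∧
    IsLeaf T b ∧ b ≠ u ∧ ¬ T.Adj u b ∧
    ∀ x y, T'.Adj x y ↔
      ((T.Adj x y ∧ x ≠ b ∧ y ≠ b) ∨ (x = b ∧ y = u) ∨ (x = u ∧ y = b))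

/-- Disjoint union of `K_m` and `K_l`. -/
def kUnion (m l : ℕ) : SimpleGraph (Fin m ⊕ Fin l) where
  Adj x y := x ≠ y ∧ ((x.isLeft ∧ y.isLeft) ∨ (x.isRight ∧ y.isRight))
  symm := ⟨fun x y h => ⟨h.1.symm, h.2.imp (fun p => ⟨p.2, p.1⟩) (fun p => ⟨p.2, p.1⟩)⟩⟩
  loopless := ⟨fun x h => h.1 rfl⟩

/-- Disjoint union of `k` graphs, each on `Fin n`. -/
def disjUnion {k n : ℕ} (Fs : Fin k → SimpleGraph (Fin n)) :
    SimpleGraph (Fin k × Fin n) where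
  Adj x y := x.1 = y.1 ∧ (Fs x.1).Adj x.2 y.2
  symm := by
    constructor
    rintro ⟨i, a⟩ ⟨j, b⟩ ⟨h1, h2⟩
    dsimp at h1 h2 ⊢
    subst h1
    exact ⟨rfl, h2.symm⟩
  loopless := by
    constructor
    rintro ⟨i, a⟩ ⟨h1, h2⟩
    exact (Fs i).loopless.irrefl a h2

/-- Disjoint union of graphs `Fs i` on `Fin (n i)`. -/
def sigmaUnion {r : ℕ} {n : Fin r → ℕ} (Fs : ∀ i, SimpleGraph (Fin (n i))) :
    SimpleGraph (Σ i, Fin (n i)) where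
  Adj x y := ∃ (i : Fin r) (a b : Fin (n i)), x = ⟨i, a⟩ ∧ y = ⟨i, b⟩ ∧ (Fs i).Adj a b
  symm := by
    constructor
    rintro x y ⟨i, a, b, hx, hy, h⟩
    exact ⟨i, b, a, hy, hx, h.symm⟩
  loopless := by
    constructor
    rintro x ⟨i, a, b, hx, hy, h⟩
    rw [hx] at hy
    obtain ⟨-, hab⟩ := (Sigma.mk.inj_iff).mp hy
    exact (Fs i).loopless.irrefl a (by cases eq_of_heq hab; exact h)

lemma embeds_comap {U V X : Type*} (G : SimpleGraph U) (R : SimpleGraph X) (ι : V → X)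
    (hι : Function.Injective ι) (h : graphEmbeds G (R.comap ι)) : graphEmbeds G R := by
  obtain ⟨f, hf, ha⟩ := h
  exact ⟨ι ∘ f, hι.comp hf, fun u v huv => ha u v huv⟩

lemma embeds_comap_compl {U V X : Type*} (G : SimpleGraph U) (R : SimpleGraph X) (ι : V → X)
    (hι : Function.Injective ι) (h : graphEmbeds G (R.comap ι)ᶜ) : graphEmbeds G Rᶜ := by
  obtain ⟨f, hf, ha⟩ := h
  refine ⟨ι ∘ f, hι.comp hf, fun u v huv => ?_⟩
  obtain ⟨hne, hnadj⟩ := ha u v huv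
  exact ⟨fun e => hne (hι e), hnadj⟩

lemma isRamsey_mono {V X : Type*} (G : SimpleGraph V) (H : SimpleGraph X) {N N' : ℕ}
    (h : isRamsey G H N) (hle : N ≤ N') : isRamsey G H N' := by
  intro R
  rcases h (R.comap (Fin.castLE hle)) with hr | hb
  · exact Or.inl (embeds_comap _ _ _ (Fin.castLE_injective hle) hr)
  · exact Or.inr (embeds_comap_compl _ _ _ (Fin.castLE_injective hle) hb)

lemma isRamsey_component {X : Type*} {H : SimpleGraph X} {r : ℕ} {n : Fin r → ℕ}
    {Fs : ∀ i, SimpleGraph (Fin (n i))} {N : ℕ}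
    (h : isRamsey (sigmaUnion Fs) H N) (p : Fin r) : isRamsey (Fs p) H N := by
  intro R
  rcases h R with ⟨f, hf, ha⟩ | hb
  · refine Or.inl ⟨fun a => f ⟨p, a⟩, fun a b he => ?_,
      fun a b hab => ha _ _ ⟨p, a, b, rfl, rfl, hab⟩⟩
    have h2 := hf he
    exact eq_of_heq (Sigma.mk.inj_iff.mp h2).2
  · exact Or.inr hb

lemma main_bound : ∀ (r : ℕ) (n : Fin r → ℕ) (Fs : ∀ i, SimpleGraph (Fin (n i)))
    {X : Type*} (H : SimpleGraph X) (N : ℕ),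
    (∀ p, isRamsey (Fs p) H (ramsey (Fs p) H)) →
    ((Finset.univ.image n).sup (fun j =>
        ((Finset.univ.filter (fun p => n p = j)).sup fun p => ramsey (Fs p) H) +
          (∑ i ∈ Finset.Icc j (Finset.univ.sup n),
            i * (Finset.univ.filter (fun p => n p = i)).card) - j)) ≤ N →
    isRamsey (sigmaUnion Fs) H N := by
  intro r
  induction r with
  | zero =>
    intro n Fs X H N _ _ R
    exact Or.inl ⟨fun x => x.1.elim0, fun x => x.1.elim0, fun u => u.1.elim0⟩
  | succ r ih =>
    intro n Fs X H N hyp hN R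
    obtain ⟨p0, -, hp0⟩ := Finset.exists_mem_eq_sup Finset.univ
      (⟨0, Finset.mem_univ 0⟩ : Finset.univ.Nonempty) n
    -- hp0 : univ.sup n = n p0
    -- counting relation
    have hkk : ∀ i, (Finset.univ.filter (fun p : Fin (r+1) => n p = i)).card
        = (Finset.univ.filter (fun q : Fin r => n (p0.succAbove q) = i)).card
          + (if n p0 = i then 1 else 0) := by
      intro i
      rw [Finset.card_filter, Fin.sum_univ_succAbove (fun p => if n p = i then 1 else 0) p0,
        Finset.card_filter, Nat.add_comm]
    have hsup' : Finset.univ.sup (fun q : Fin r => n (p0.succAbove q)) ≤ n p0 := by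
      refine Finset.sup_le fun q _ => ?_
      rw [← hp0]; exact Finset.le_sup (Finset.mem_univ _)
    -- the key sum inequality
    have hS : ∀ j, j ≤ n p0 →
        (∑ i ∈ Finset.Icc j (Finset.univ.sup fun q : Fin r => n (p0.succAbove q)),
          i * (Finset.univ.filter (fun q : Fin r => n (p0.succAbove q) = i)).card) + n p0
        ≤ ∑ i ∈ Finset.Icc j (Finset.univ.sup n),
            i * (Finset.univ.filter (fun p : Fin (r+1) => n p = i)).card := by
      intro j hj
      have h1 : ∑ i ∈ Finset.Icc j (Finset.univ.sup n),
            i * (Finset.univ.filter (fun p : Fin (r+1) => n p = i)).card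
          = (∑ i ∈ Finset.Icc j (Finset.univ.sup n),
              i * (Finset.univ.filter (fun q : Fin r => n (p0.succAbove q) = i)).card)
            + ∑ i ∈ Finset.Icc j (Finset.univ.sup n), (if n p0 = i then i else 0) := by
        rw [← Finset.sum_add_distrib]
        refine Finset.sum_congr rfl fun i _ => ?_
        rw [hkk i]
        split <;> ring
      rw [h1, Finset.sum_ite_eq (Finset.Icc j (Finset.univ.sup n)) (n p0) (fun i => i)]
      rw [if_pos (Finset.mem_Icc.mpr ⟨hj, by rw [hp0]⟩)]
      refine Nat.add_le_add ?_ le_rfl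
      refine Finset.sum_le_sum_of_subset (Finset.Icc_subset_Icc_right ?_)
      rw [hp0]; exact hsup'
    -- j ≤ S' j for j in the image
    have hjS' : ∀ q : Fin r, n (p0.succAbove q)
        ≤ ∑ i ∈ Finset.Icc (n (p0.succAbove q))
            (Finset.univ.sup fun q : Fin r => n (p0.succAbove q)),
            i * (Finset.univ.filter (fun q' : Fin r => n (p0.succAbove q') = i)).card := by
      intro q
      have hmem : n (p0.succAbove q) ∈ Finset.Icc (n (p0.succAbove q))
          (Finset.univ.sup fun q : Fin r => n (p0.succAbove q)) :=
        Finset.mem_Icc.mpr ⟨le_rfl, Finset.le_sup (f := fun q : Fin r => n (p0.succAbove q)) (Finset.mem_univ q)⟩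
      calc n (p0.succAbove q) ≤ n (p0.succAbove q) *
            (Finset.univ.filter (fun q' : Fin r => n (p0.succAbove q') = n (p0.succAbove q))).card := by
            refine Nat.le_mul_of_pos_right _ (Finset.card_pos.mpr ⟨q, ?_⟩)
            simp
        _ ≤ _ := Finset.single_le_sum (f := fun i => i * (Finset.univ.filter (fun q' : Fin r => n (p0.succAbove q') = i)).card) (fun i _ => Nat.zero_le _) hmem
    -- j ≤ S j for j in the image
    have hjS : ∀ p : Fin (r+1), n p
        ≤ ∑ i ∈ Finset.Icc (n p) (Finset.univ.sup n),
            i * (Finset.univ.filter (fun p' : Fin (r+1) => n p' = i)).card := by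
      intro p
      have hmem : n p ∈ Finset.Icc (n p) (Finset.univ.sup n) :=
        Finset.mem_Icc.mpr ⟨le_rfl, Finset.le_sup (Finset.mem_univ p)⟩
      calc n p ≤ n p * (Finset.univ.filter (fun p' : Fin (r+1) => n p' = n p)).card := by
            refine Nat.le_mul_of_pos_right _ (Finset.card_pos.mpr ⟨p, ?_⟩)
            simp
        _ ≤ _ := Finset.single_le_sum (f := fun i => i * (Finset.univ.filter (fun p' : Fin (r+1) => n p' = i)).card) (fun i _ => Nat.zero_le _) hmem
    -- bound for each j in the image : M(j) ≤ N
    have hMN : ∀ p : Fin (r+1),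
        ((Finset.univ.filter (fun p' : Fin (r+1) => n p' = n p)).sup fun p' => ramsey (Fs p') H)
          + (∑ i ∈ Finset.Icc (n p) (Finset.univ.sup n),
              i * (Finset.univ.filter (fun p' : Fin (r+1) => n p' = i)).card) - n p ≤ N := by
      intro p
      refine le_trans ?_ hN
      exact Finset.le_sup (f := fun j =>
        ((Finset.univ.filter (fun p' : Fin (r+1) => n p' = j)).sup fun p' => ramsey (Fs p') H) +
          (∑ i ∈ Finset.Icc j (Finset.univ.sup n),
            i * (Finset.univ.filter (fun p' : Fin (r+1) => n p' = i)).card) - j)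
        (Finset.mem_image_of_mem n (Finset.mem_univ p))
    -- step 1 : ramsey (Fs p0) H ≤ N
    have hr0 : ramsey (Fs p0) H ≤ N := by
      have h1 : ramsey (Fs p0) H
          ≤ (Finset.univ.filter (fun p' : Fin (r+1) => n p' = n p0)).sup
              fun p' => ramsey (Fs p') H :=
        Finset.le_sup (f := fun p' : Fin (r+1) => ramsey (Fs p') H)
          (Finset.mem_filter.mpr ⟨Finset.mem_univ _, rfl⟩)
      have h2 := hjS p0
      have h3 := hMN p0
      omega
    rcases isRamsey_mono _ _ (hyp p0) hr0 R with ⟨f0, hf0i, hf0a⟩ | hb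
    swap
    · exact Or.inr hb
    -- red copy of Fs p0 found
    have hm0N : n p0 ≤ N := by
      have := Fintype.card_le_of_injective f0 hf0i
      simpa using this
    set s : Finset (Fin N) := Finset.univ \ Finset.univ.image f0 with hsdef
    have hscard : s.card = N - n p0 := by
      rw [hsdef, Finset.card_sdiff_of_subset (Finset.subset_univ _), Finset.card_univ,
        Finset.card_image_of_injective _ hf0i, Finset.card_univ]
      simp
    set g := s.orderEmbOfFin hscard with hgdef
    have hgmem : ∀ z, g z ∈ s := fun z => Finset.orderEmbOfFin_mem s hscard z
    have hdisj : ∀ a z, f0 a ≠ g z := by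
      intro a z h
      have hz := hgmem z
      rw [← h, hsdef, Finset.mem_sdiff] at hz
      exact hz.2 (Finset.mem_image_of_mem f0 (Finset.mem_univ a))
    -- apply induction hypothesis on the remaining vertices
    have hbound : (Finset.univ.image fun q : Fin r => n (p0.succAbove q)).sup (fun j =>
        ((Finset.univ.filter (fun q : Fin r => n (p0.succAbove q) = j)).sup
            fun q => ramsey (Fs (p0.succAbove q)) H) +
          (∑ i ∈ Finset.Icc j (Finset.univ.sup fun q : Fin r => n (p0.succAbove q)),
            i * (Finset.univ.filter (fun q : Fin r => n (p0.succAbove q) = i)).card) - j)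
        ≤ N - n p0 := by
      refine Finset.sup_le fun j hj => ?_
      obtain ⟨q, -, rfl⟩ := Finset.mem_image.mp hj
      have hA : ((Finset.univ.filter
            (fun q' : Fin r => n (p0.succAbove q') = n (p0.succAbove q))).sup
            fun q' => ramsey (Fs (p0.succAbove q')) H)
          ≤ (Finset.univ.filter
              (fun p' : Fin (r+1) => n p' = n (p0.succAbove q))).sup
              fun p' => ramsey (Fs p') H := by
        refine Finset.sup_le fun q' hq' => ?_
        exact Finset.le_sup (f := fun p' : Fin (r+1) => ramsey (Fs p') H)
          (Finset.mem_filter.mpr ⟨Finset.mem_univ _, (Finset.mem_filter.mp hq').2⟩)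
      have hjle : n (p0.succAbove q) ≤ n p0 := by
        rw [← hp0]; exact Finset.le_sup (Finset.mem_univ _)
      have h2 := hS (n (p0.succAbove q)) hjle
      have h3 := hjS' q
      have h4 := hMN (p0.succAbove q)
      omega
    rcases ih (fun q => n (p0.succAbove q)) (fun q => Fs (p0.succAbove q)) H (N - n p0)
        (fun q => hyp _) hbound (R.comap fun x => g x) with ⟨f', hf'i, hf'a⟩ | hb'
    swap
    · exact Or.inr (embeds_comap_compl H R _ (fun a b h => g.injective h) hb')
    -- combine the two embeddings
    refine Or.inl ⟨fun x => Fin.insertNth (α := fun i => Fin (n i) → Fin N) p0 f0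
      (fun q a => g (f' ⟨q, a⟩)) x.1 x.2, ?_, ?_⟩
    · rintro ⟨i, a⟩ ⟨i', b⟩ hxy
      dsimp at hxy
      by_cases hi : i = p0 <;> by_cases hi' : i' = p0
      · subst hi; subst hi'
        rw [Fin.insertNth_apply_same] at hxy
        rw [hf0i hxy]
      · subst hi
        obtain ⟨q, rfl⟩ := Fin.exists_succAbove_eq hi'
        rw [Fin.insertNth_apply_same, Fin.insertNth_apply_succAbove] at hxy
        exact absurd hxy (hdisj _ _)
      · subst hi'
        obtain ⟨q, rfl⟩ := Fin.exists_succAbove_eq hi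
        rw [Fin.insertNth_apply_same, Fin.insertNth_apply_succAbove] at hxy
        exact absurd hxy.symm (hdisj _ _)
      · obtain ⟨q, rfl⟩ := Fin.exists_succAbove_eq hi
        obtain ⟨q', rfl⟩ := Fin.exists_succAbove_eq hi'
        rw [Fin.insertNth_apply_succAbove, Fin.insertNth_apply_succAbove] at hxy
        have h1 := hf'i (g.injective hxy)
        obtain ⟨h2, h3⟩ := Sigma.mk.inj_iff.mp h1
        subst h2
        rw [eq_of_heq h3]
    · rintro u v ⟨i, a, b, rfl, rfl, hab⟩
      dsimp
      by_cases hi : i = p0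
      · subst hi
        rw [Fin.insertNth_apply_same]
        exact hf0a a b hab
      · obtain ⟨q, rfl⟩ := Fin.exists_succAbove_eq hi
        rw [Fin.insertNth_apply_succAbove]
        exact hf'a _ _ ⟨q, a, b, rfl, rfl, hab⟩


/-- Theorem 4.3 (upper bound): for the disjoint union `F` of graphs `F_1,…,F_r`,
`R(F,H) ≤ max_{j ∈ I} ( max_{v(F_p)=j} R(F_p,H) + Σ_{i=j}^{n(F)} i·k_i(F) − j )`. -/
theorem stmt_13 {W : Type*} (H : SimpleGraph W) (r : ℕ) (n : Fin r → ℕ)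
    (Fs : ∀ i, SimpleGraph (Fin (n i))) :
    ramsey (sigmaUnion Fs) H ≤
      (Finset.univ.image n).sup (fun j =>
        ((Finset.univ.filter (fun p => n p = j)).sup fun p => ramsey (Fs p) H) +
          (∑ i ∈ Finset.Icc j (Finset.univ.sup n),
            i * (Finset.univ.filter (fun p => n p = i)).card) - j) := by
  by_cases hne : {N | isRamsey (sigmaUnion Fs) H N}.Nonempty
  · obtain ⟨N0, hN0⟩ := hne
    have hcomp : ∀ p, isRamsey (Fs p) H (ramsey (Fs p) H) := by
      intro p
      have h1 : isRamsey (Fs p) H N0 := isRamsey_component hN0 p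
      have h2 : {N | isRamsey (Fs p) H N}.Nonempty := ⟨N0, h1⟩
      exact Nat.sInf_mem h2
    exact Nat.sInf_le (main_bound (r) n Fs H _ hcomp le_rfl)
  · rw [Set.not_nonempty_iff_eq_empty] at hne
    rw [ramsey, hne, Nat.sInf_empty]
    exact Nat.zero_le _
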